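/- Let E be a real inner product space, Ω ⊆ E an open convex set, and φ : Ω → ℝ a differentiable convex function with gradient ∇φ. Let Z and A be independent Ω-valued random variables on a probability space such that Z, φ(Z), A, φ(A), and ∇φ(A) are integrable (and the cross terms ⟪∇φ(A), Z⟫, ⟪∇φ(A), A⟫ are integrable), with μ := E[Z] ∈ Ω. Then E[D_φ(Z, A)] = E[D_φ(Z, μ)] + E[D_φ(μ, A)]: the expected Bregman loss of a random predictor A on an independent target Z splits into the Bayes error E[D_φ(Z, E[Z])] plus the expected divergence from the target mean to the predictor. -/

import Mathlib

open MeasureTheory ProbabilityTheory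
open scoped RealInnerProductSpace

/-- The Bregman divergence of `φ` with gradient field `g`:
`D_φ(x, y) = φ x − φ y − ⟪∇φ(y), x − y⟫`. -/
noncomputable def bregman {E : Type*} [NormedAddCommGroup E] [InnerProductSpace ℝ E]
    (φ : E → ℝ) (g : E → E) (x y : E) : ℝ :=
  φ x - φ y - ⟪g y, x - y⟫


theorem indepFun_integral_inner_of_secondCountable
    {E : Type*} [NormedAddCommGroup E] [InnerProductSpace ℝ E] [CompleteSpace E]
    [MeasurableSpace E] [BorelSpace E] [SecondCountableTopology E]
    {α : Type*} [MeasurableSpace α] (P : Measure α) [IsProbabilityMeasure P]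
    (X Y : α → E) (hXY : IndepFun X Y P)
    (hX : Integrable X P) (hY : Integrable Y P)
    (hXYi : Integrable (fun ω => ⟪X ω, Y ω⟫) P) :
    ∫ ω, ⟪X ω, Y ω⟫ ∂P = ⟪∫ ω, X ω ∂P, ∫ ω, Y ω ∂P⟫ := by
  have hXm : AEMeasurable X P := hX.aestronglyMeasurable.aemeasurable
  have hYm : AEMeasurable Y P := hY.aestronglyMeasurable.aemeasurable
  have hmap : P.map (fun ω => (X ω, Y ω)) = (P.map X).prod (P.map Y) :=
    (ProbabilityTheory.indepFun_iff_map_prod_eq_prod_map_map hXm hYm).mp hXY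
  have hcont : Continuous (fun p : E × E => ⟪p.1, p.2⟫) := continuous_inner
  have hinner : AEStronglyMeasurable (fun p : E × E => ⟪p.1, p.2⟫)
      (P.map fun ω => (X ω, Y ω)) := hcont.aestronglyMeasurable
  have hid : ∀ (μ' : Measure E), AEStronglyMeasurable (fun y : E => y) μ' :=
    fun μ' => (measurable_id.stronglyMeasurable).aestronglyMeasurable
  have h1 : ∫ ω, ⟪X ω, Y ω⟫ ∂P
      = ∫ p, ⟪p.1, p.2⟫ ∂(P.map fun ω => (X ω, Y ω)) :=
    (integral_map (hXm.prodMk hYm) hinner).symm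
  have hintp : Integrable (fun p : E × E => ⟪p.1, p.2⟫) ((P.map X).prod (P.map Y)) := by
    rw [← hmap]
    exact (integrable_map_measure hinner (hXm.prodMk hYm)).mpr hXYi
  have hYmap : Integrable (fun y : E => y) (P.map Y) :=
    (integrable_map_measure (hid _) hYm).mpr hY
  have hXmap : Integrable (fun x : E => x) (P.map X) :=
    (integrable_map_measure (hid _) hXm).mpr hX
  rw [h1, hmap, MeasureTheory.integral_prod _ hintp]
  have h2 : ∀ x : E, ∫ y, ⟪x, y⟫ ∂(P.map Y) = ⟪x, ∫ y, (y : E) ∂(P.map Y)⟫ :=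
    fun x => integral_inner hYmap x
  simp_rw [h2]
  have h3 : ∫ x, ⟪x, ∫ y, (y : E) ∂(P.map Y)⟫ ∂(P.map X)
      = ⟪∫ x, (x : E) ∂(P.map X), ∫ y, (y : E) ∂(P.map Y)⟫ := by
    have hc : ∫ x, ⟪x, ∫ y, (y : E) ∂(P.map Y)⟫ ∂(P.map X)
        = ∫ x, ⟪∫ y, (y : E) ∂(P.map Y), x⟫ ∂(P.map X) :=
      integral_congr_ae (Filter.Eventually.of_forall fun x => real_inner_comm _ _)
    rw [hc, integral_inner hXmap, real_inner_comm]
  rw [h3]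
  have h4 : ∫ x, (x : E) ∂(P.map X) = ∫ ω, X ω ∂P := integral_map hXm (hid _)
  have h5 : ∫ y, (y : E) ∂(P.map Y) = ∫ ω, Y ω ∂P := integral_map hYm (hid _)
  rw [h4, h5]

theorem indepFun_integral_inner
    {E : Type*} [NormedAddCommGroup E] [InnerProductSpace ℝ E] [CompleteSpace E]
    [MeasurableSpace E] [BorelSpace E]
    {α : Type*} [MeasurableSpace α] (P : Measure α) [IsProbabilityMeasure P]
    (X Y : α → E) (hXY : IndepFun X Y P)
    (hX : Integrable X P) (hY : Integrable Y P)
    (hXYi : Integrable (fun ω => ⟪X ω, Y ω⟫) P) :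
    ∫ ω, ⟪X ω, Y ω⟫ ∂P = ⟪∫ ω, X ω ∂P, ∫ ω, Y ω ∂P⟫ := by
  obtain ⟨hXm, tX, htX, hXt⟩ :=
    aestronglyMeasurable_iff_aemeasurable_separable.mp hX.aestronglyMeasurable
  obtain ⟨hYm, tY, htY, hYt⟩ :=
    aestronglyMeasurable_iff_aemeasurable_separable.mp hY.aestronglyMeasurable
  set U : Submodule ℝ E := (Submodule.span ℝ (tX ∪ tY)).topologicalClosure with hU
  have hUsep : TopologicalSpace.IsSeparable (U : Set E) := by
    have := (htX.union htY).span (R := ℝ)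
    exact this.closure
  haveI : TopologicalSpace.SeparableSpace U := hUsep.separableSpace
  haveI : SecondCountableTopology U := UniformSpace.secondCountable_of_separable U
  haveI : CompleteSpace U := (Submodule.isClosed_topologicalClosure _).completeSpace_coe
  have hsub : tX ∪ tY ⊆ (U : Set E) :=
    (Submodule.subset_span).trans (Submodule.le_topologicalClosure _)
  set p : E →L[ℝ] U := U.orthogonalProjectionOnto with hp
  have hpm : Measurable p := p.continuous.measurable
  set X' : α → U := fun ω => p (X ω) with hX'
  set Y' : α → U := fun ω => p (Y ω) with hY'
  have hXU : ∀ᵐ ω ∂P, X ω ∈ U := hXt.mono fun ω h => hsub (Set.mem_union_left _ h)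
  have hYU : ∀ᵐ ω ∂P, Y ω ∈ U := hYt.mono fun ω h => hsub (Set.mem_union_right _ h)
  have hXe : ∀ᵐ ω ∂P, ((X' ω : E)) = X ω := by
    filter_upwards [hXU] with ω h
    have := Submodule.orthogonalProjectionOnto_mem_subspace_eq_self (K := U) ⟨X ω, h⟩
    exact congrArg (Subtype.val) this
  have hYe : ∀ᵐ ω ∂P, ((Y' ω : E)) = Y ω := by
    filter_upwards [hYU] with ω h
    have := Submodule.orthogonalProjectionOnto_mem_subspace_eq_self (K := U) ⟨Y ω, h⟩
    exact congrArg (Subtype.val) this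
  have hindep' : IndepFun X' Y' P := hXY.comp hpm hpm
  have hX'i : Integrable X' P := p.integrable_comp hX
  have hY'i : Integrable Y' P := p.integrable_comp hY
  have hinner_eq : ∀ᵐ ω ∂P, ⟪X ω, Y ω⟫ = ⟪X' ω, Y' ω⟫ := by
    filter_upwards [hXe, hYe] with ω h1 h2
    rw [← h1, ← h2]; rfl
  have hXY'i : Integrable (fun ω => ⟪X' ω, Y' ω⟫) P := hXYi.congr hinner_eq
  have key := indepFun_integral_inner_of_secondCountable P X' Y' hindep' hX'i hY'i hXY'i
  rw [integral_congr_ae hinner_eq, key]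
  have hcX : ((∫ ω, X' ω ∂P : U) : E) = ∫ ω, X ω ∂P := by
    rw [show ((∫ ω, X' ω ∂P : U) : E) = U.subtypeL (∫ ω, X' ω ∂P) from rfl,
      ← U.subtypeL.integral_comp_comm hX'i]
    exact integral_congr_ae hXe
  have hcY : ((∫ ω, Y' ω ∂P : U) : E) = ∫ ω, Y ω ∂P := by
    rw [show ((∫ ω, Y' ω ∂P : U) : E) = U.subtypeL (∫ ω, Y' ω ∂P) from rfl,
      ← U.subtypeL.integral_comp_comm hY'i]
    exact integral_congr_ae hYe
  rw [← hcX, ← hcY]; rfl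

/-- Bias–variance type decomposition: the expected Bregman loss of an independent
random predictor `A` on a target `Z` splits into the Bayes error
`E[D_φ(Z, E[Z])]` plus the expected divergence from the target mean to the
predictor, `E[D_φ(E[Z], A)]`. -/
theorem expected_bregman_independent_predictor_decomposition
    {E : Type*} [NormedAddCommGroup E] [InnerProductSpace ℝ E] [CompleteSpace E]
    [MeasurableSpace E] [BorelSpace E]
    (Ω : Set E) (hΩo : IsOpen Ω) (hΩc : Convex ℝ Ω)
    (φ : E → ℝ) (g : E → E)
    (hφ : ConvexOn ℝ Ω φ)
    (hg : ∀ y ∈ Ω, HasGradientAt φ (g y) y)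
    {α : Type*} [MeasurableSpace α] (P : Measure α) [IsProbabilityMeasure P]
    (Z A : α → E) (hZΩ : ∀ ω, Z ω ∈ Ω) (hAΩ : ∀ ω, A ω ∈ Ω)
    (hindep : IndepFun Z A P)
    (hZ : Integrable Z P) (hφZ : Integrable (fun ω => φ (Z ω)) P)
    (hA : Integrable A P) (hφA : Integrable (fun ω => φ (A ω)) P)
    (hgA : Integrable (fun ω => g (A ω)) P)
    (hgAZ : Integrable (fun ω => ⟪g (A ω), Z ω⟫) P)
    (hgAA : Integrable (fun ω => ⟪g (A ω), A ω⟫) P)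
    (μ : E) (hμ : μ = ∫ ω, Z ω ∂P) (hμΩ : μ ∈ Ω) :
    ∫ ω, bregman φ g (Z ω) (A ω) ∂P
      = (∫ ω, bregman φ g (Z ω) μ ∂P) + ∫ ω, bregman φ g μ (A ω) ∂P := by
  -- the measurable gradient
  set h : E → E := fun y => (InnerProductSpace.toDual ℝ E).symm (fderiv ℝ φ y) with hh
  have hmeas : Measurable h :=
    (InnerProductSpace.toDual ℝ E).symm.continuous.measurable.comp (measurable_fderiv ℝ φ)
  have heq : ∀ y ∈ Ω, h y = g y := by
    intro y hy
    have hf : HasFDerivAt φ (InnerProductSpace.toDual ℝ E (g y)) y := (hg y hy).hasFDerivAt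
    rw [hh]
    simp only [hf.fderiv, LinearIsometryEquiv.symm_apply_apply]
  have hGA : (fun ω => g (A ω)) = fun ω => h (A ω) :=
    funext fun ω => (heq _ (hAΩ ω)).symm
  -- independence of g(A) and Z
  have hindep' : IndepFun (fun ω => h (A ω)) Z P := by
    have := (hindep.symm).comp hmeas measurable_id
    exact this
  -- key identity
  have key : ∫ ω, ⟪g (A ω), Z ω⟫ ∂P = ⟪∫ ω, g (A ω) ∂P, μ⟫ := by
    have c1 : ∫ ω, ⟪g (A ω), Z ω⟫ ∂P = ∫ ω, ⟪h (A ω), Z ω⟫ ∂P :=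
      integral_congr_ae (Filter.Eventually.of_forall fun ω => by dsimp only; rw [heq _ (hAΩ ω)])
    have c2 : ∫ ω, g (A ω) ∂P = ∫ ω, h (A ω) ∂P :=
      integral_congr_ae (Filter.Eventually.of_forall fun ω => (heq _ (hAΩ ω)).symm)
    rw [c1, c2, hμ]
    exact indepFun_integral_inner P (fun ω => h (A ω)) Z hindep'
      (hGA ▸ hgA) hZ (hgAZ.congr (Filter.Eventually.of_forall fun ω => by dsimp only; rw [heq _ (hAΩ ω)]))
  have hgAμ : Integrable (fun ω => ⟪g (A ω), μ⟫) P := hgA.inner_const μ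
  have hgμZ : Integrable (fun ω => ⟪g μ, Z ω⟫) P := hZ.const_inner (g μ)
  -- expand the three integrals
  have e1 : ∫ ω, bregman φ g (Z ω) (A ω) ∂P
      = (∫ ω, φ (Z ω) ∂P) - (∫ ω, φ (A ω) ∂P)
        - (∫ ω, ⟪g (A ω), Z ω⟫ ∂P) + ∫ ω, ⟪g (A ω), A ω⟫ ∂P := by
    have : ∀ ω, bregman φ g (Z ω) (A ω)
        = φ (Z ω) - φ (A ω) - ⟪g (A ω), Z ω⟫ + ⟪g (A ω), A ω⟫ := by
      intro ω; simp only [bregman, inner_sub_right]; ring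
    have i1 : Integrable (fun ω => φ (Z ω) - φ (A ω) - ⟪g (A ω), Z ω⟫) P :=
      (hφZ.sub hφA).sub hgAZ
    have j1 : Integrable (fun ω => φ (Z ω) - φ (A ω)) P := hφZ.sub hφA
    rw [integral_congr_ae (Filter.Eventually.of_forall this),
      integral_add i1 hgAA, integral_sub j1 hgAZ, integral_sub hφZ hφA]
  have e2 : ∫ ω, bregman φ g (Z ω) μ ∂P = (∫ ω, φ (Z ω) ∂P) - φ μ := by
    have : ∀ ω, bregman φ g (Z ω) μ
        = φ (Z ω) - φ μ - ⟪g μ, Z ω⟫ + ⟪g μ, μ⟫ := by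
      intro ω; simp only [bregman, inner_sub_right]; ring
    have i2 : Integrable (fun ω => φ (Z ω) - φ μ - ⟪g μ, Z ω⟫) P :=
      (hφZ.sub (integrable_const _)).sub hgμZ
    have j2 : Integrable (fun ω => φ (Z ω) - φ μ) P := hφZ.sub (integrable_const _)
    rw [integral_congr_ae (Filter.Eventually.of_forall this),
      integral_add i2 (integrable_const _),
      integral_sub j2 hgμZ,
      integral_sub hφZ (integrable_const _), integral_const, integral_const,
      integral_inner hZ, ← hμ]
    simp only [measure_univ, probReal_univ, ENNReal.toReal_one, one_smul, smul_eq_mul, one_mul]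
    ring
  have e3 : ∫ ω, bregman φ g μ (A ω) ∂P
      = φ μ - (∫ ω, φ (A ω) ∂P) - ⟪∫ ω, g (A ω) ∂P, μ⟫ + ∫ ω, ⟪g (A ω), A ω⟫ ∂P := by
    have : ∀ ω, bregman φ g μ (A ω)
        = φ μ - φ (A ω) - ⟪g (A ω), μ⟫ + ⟪g (A ω), A ω⟫ := by
      intro ω; simp only [bregman, inner_sub_right]; ring
    have i3 : Integrable (fun ω => φ μ - φ (A ω) - ⟪g (A ω), μ⟫) P :=
      ((integrable_const _).sub hφA).sub hgAμ
    have j3 : Integrable (fun ω => φ μ - φ (A ω)) P := (integrable_const _).sub hφA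
    rw [integral_congr_ae (Filter.Eventually.of_forall this),
      integral_add i3 hgAA, integral_sub j3 hgAμ,
      integral_sub (integrable_const _) hφA, integral_const]
    have : ∫ ω, ⟪g (A ω), μ⟫ ∂P = ⟪∫ ω, g (A ω) ∂P, μ⟫ := by
      have hc : ∫ ω, ⟪g (A ω), μ⟫ ∂P = ∫ ω, ⟪μ, g (A ω)⟫ ∂P :=
        integral_congr_ae (Filter.Eventually.of_forall fun ω => real_inner_comm _ _)
      rw [hc, integral_inner hgA, real_inner_comm]
    rw [this]
    simp only [measure_univ, probReal_univ, ENNReal.toReal_one, one_smul, smul_eq_mul, one_mul]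
  rw [e1, e2, e3, key]
  ring
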